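/- There exist a semigroup and nets for which the product density formula fails without identities: in (ℕ,+) with nets E_n = {1} and F_n = {2} for all n, one has d*_E({2}) = d*_F({2}) = 1, but d*_{E*F}({(2,2)}) = 0. -/
import Mathlib

open scoped Classical

/-- Additive translate `F + s` by an element of `S ∪ {0-shift omitted}`
(`none` meaning "no shift"). -/
def netShiftAdd {S : Type*} [Add S] (F : Set S) : Option S → Set S
  | none => F
  | some t => (· + t) '' F

/-- Upper Banach density (additive notation) of `A ⊆ S` with respect to a net of
finite nonempty subsets of `S`. -/
noncomputable def uBDAdd {S : Type*} [Add S] {I : Type*} [Preorder I]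
    (F : I → Set S) (A : Set S) : ℝ :=
  sSup {α : ℝ | ∀ i₀ : I, ∃ i, i₀ ≤ i ∧ ∃ s : Option S,
    α * ((F i).ncard : ℝ) ≤ ((A ∩ netShiftAdd (F i) s).ncard : ℝ)}

theorem product_density_fails_without_identity :
    uBDAdd (fun _ : ℕ => ({1} : Set ℕ+)) ({2} : Set ℕ+) = 1 ∧
    uBDAdd (fun _ : ℕ => ({2} : Set ℕ+)) ({2} : Set ℕ+) = 1 ∧
    uBDAdd (fun _ : ℕ × ℕ => (({1} : Set ℕ+) ×ˢ ({2} : Set ℕ+)))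
      ({((2 : ℕ+), (2 : ℕ+))} : Set (ℕ+ × ℕ+)) = 0 := by
  refine ⟨?_, ?_, ?_⟩
  · rw [uBDAdd]
    have h : {α : ℝ | ∀ i₀ : ℕ, ∃ i, i₀ ≤ i ∧ ∃ s : Option ℕ+,
        α * ((({1} : Set ℕ+)).ncard : ℝ) ≤
          ((({2} : Set ℕ+) ∩ netShiftAdd ({1} : Set ℕ+) s).ncard : ℝ)} = Set.Iic 1 := by
      ext α
      simp only [Set.mem_setOf_eq, Set.mem_Iic, Set.ncard_singleton, Nat.cast_one, mul_one]
      constructor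
      · intro h
        obtain ⟨i, -, s, hs⟩ := h 0
        have hle : (({2} : Set ℕ+) ∩ netShiftAdd ({1} : Set ℕ+) s).ncard ≤ 1 := by
          have := Set.ncard_le_ncard (Set.inter_subset_left
            (s := ({2} : Set ℕ+)) (t := netShiftAdd ({1} : Set ℕ+) s))
            (Set.finite_singleton _)
          simpa using this
        calc α ≤ _ := hs
          _ ≤ 1 := by exact_mod_cast hle
      · intro hα i₀
        refine ⟨i₀, le_refl _, some 1, ?_⟩
        have h2 : netShiftAdd ({1} : Set ℕ+) (some 1) = {2} := by
          show (· + 1) '' {1} = {2}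
          rw [Set.image_singleton]
          rfl
        rw [h2]
        simpa using hα
    rw [h]
    exact csSup_Iic
  · rw [uBDAdd]
    have h : {α : ℝ | ∀ i₀ : ℕ, ∃ i, i₀ ≤ i ∧ ∃ s : Option ℕ+,
        α * ((({2} : Set ℕ+)).ncard : ℝ) ≤
          ((({2} : Set ℕ+) ∩ netShiftAdd ({2} : Set ℕ+) s).ncard : ℝ)} = Set.Iic 1 := by
      ext α
      simp only [Set.mem_setOf_eq, Set.mem_Iic, Set.ncard_singleton, Nat.cast_one, mul_one]
      constructor
      · intro h
        obtain ⟨i, -, s, hs⟩ := h 0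
        have hle : (({2} : Set ℕ+) ∩ netShiftAdd ({2} : Set ℕ+) s).ncard ≤ 1 := by
          have := Set.ncard_le_ncard (Set.inter_subset_left
            (s := ({2} : Set ℕ+)) (t := netShiftAdd ({2} : Set ℕ+) s))
            (Set.finite_singleton _)
          simpa using this
        calc α ≤ _ := hs
          _ ≤ 1 := by exact_mod_cast hle
      · intro hα i₀
        refine ⟨i₀, le_refl _, none, ?_⟩
        show α ≤ ((({2} : Set ℕ+) ∩ {2}).ncard : ℝ)
        simpa using hα
    rw [h]
    exact csSup_Iic
  · rw [uBDAdd]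
    have hempty : ∀ s : Option (ℕ+ × ℕ+),
        ({((2 : ℕ+), (2 : ℕ+))} : Set (ℕ+ × ℕ+)) ∩
          netShiftAdd (({1} : Set ℕ+) ×ˢ ({2} : Set ℕ+)) s = ∅ := by
      intro s
      rw [Set.eq_empty_iff_forall_notMem]
      rintro x ⟨hx1, hx2⟩
      rw [Set.mem_singleton_iff] at hx1
      subst hx1
      cases s with
      | none =>
        simp only [netShiftAdd, Set.mem_prod, Set.mem_singleton_iff] at hx2
        exact absurd hx2.1 (by decide)
      | some t =>
        simp only [netShiftAdd, Set.mem_image, Set.mem_prod,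
          Set.mem_singleton_iff] at hx2
        obtain ⟨y, ⟨hy1, hy2⟩, hy3⟩ := hx2
        have : y + t = (2, 2) := hy3
        have h2 : y.2 + t.2 = 2 := congrArg Prod.snd this
        rw [hy2] at h2
        have := congrArg PNat.val h2
        have ht := t.2.pos
        simp [PNat.add_coe] at this
    have h : {α : ℝ | ∀ i₀ : ℕ × ℕ, ∃ i, i₀ ≤ i ∧ ∃ s : Option (ℕ+ × ℕ+),
        α * (((({1} : Set ℕ+) ×ˢ ({2} : Set ℕ+))).ncard : ℝ) ≤
          ((({((2 : ℕ+), (2 : ℕ+))} : Set (ℕ+ × ℕ+)) ∩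
            netShiftAdd (({1} : Set ℕ+) ×ˢ ({2} : Set ℕ+)) s).ncard : ℝ)} = Set.Iic 0 := by
      have hF : (({1} : Set ℕ+) ×ˢ ({2} : Set ℕ+)).ncard = 1 := by
        rw [Set.singleton_prod_singleton, Set.ncard_singleton]
      ext α
      simp only [Set.mem_setOf_eq, Set.mem_Iic, hF, Nat.cast_one, mul_one]
      constructor
      · intro h
        obtain ⟨i, -, s, hs⟩ := h (0, 0)
        rw [hempty s] at hs
        simpa using hs
      · intro hα i₀
        refine ⟨i₀, le_refl _, none, ?_⟩
        rw [hempty none]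
        simpa using hα
    rw [h]
    exact csSup_Iic
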